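/- arXiv:2105.00045 — 3 statements merged into one kernel-verified Lean document; each statement's English description precedes it below -/
import Mathlib

section
/- Let n ≥ 2, f > 0, λ1, λ2 ≥ 0, μ⁰ ∈ ℝ^n, η ∈ ℝ^n, and set z_i = √f·μ⁰_i + η_i for i = 1,…,n. If μ̃ ∈ ℝ^n minimizes the pseudo LS-FLSA objective Q(·; z), then f·Σ_{i=1}^n (μ̃_i − μ⁰_i)² ≤ 2√f·Σ_{i=1}^n η_i·(μ̃_i − μ⁰_i) + (λ1 + 2λ2)·Σ_{i=1}^n |μ̃_i − μ⁰_i|. -/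
open Finset
open scoped Classical

/-- Fused lasso penalty `λ1 ∑_{i=1}^n |μ_i| + λ2 ∑_{i=2}^n |μ_i - μ_{i-1}|`. -/
noncomputable def flPen (n : ℕ) (l1 l2 : ℝ) (μ : ℕ → ℝ) : ℝ :=
  l1 * ∑ i ∈ Finset.Icc 1 n, |μ i| + l2 * ∑ i ∈ Finset.Icc 2 n, |μ i - μ (i - 1)|

/-- Pseudo LS-FLSA objective `Q(μ; z) = ∑_{i=1}^n (z_i - √f μ_i)² + P(μ)`. -/
noncomputable def lsObj (n : ℕ) (f l1 l2 : ℝ) (z μ : ℕ → ℝ) : ℝ :=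
  ∑ i ∈ Finset.Icc 1 n, (z i - Real.sqrt f * μ i) ^ 2 + flPen n l1 l2 μ

theorem stmt3 (n : ℕ) (hn : 2 ≤ n) (f : ℝ) (hf : 0 < f)
    (l1 l2 : ℝ) (hl1 : 0 ≤ l1) (hl2 : 0 ≤ l2)
    (μ0 η z : ℕ → ℝ) (hz : ∀ i, z i = Real.sqrt f * μ0 i + η i)
    (μt : ℕ → ℝ)
    (hmin : ∀ μ : ℕ → ℝ, lsObj n f l1 l2 z μt ≤ lsObj n f l1 l2 z μ) :
    f * ∑ i ∈ Finset.Icc 1 n, (μt i - μ0 i) ^ 2 ≤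
      2 * Real.sqrt f * ∑ i ∈ Finset.Icc 1 n, η i * (μt i - μ0 i) +
        (l1 + 2 * l2) * ∑ i ∈ Finset.Icc 1 n, |μt i - μ0 i| := by
  set s := Real.sqrt f with hs
  have hs2 : s ^ 2 = f := Real.sq_sqrt hf.le
  have h := hmin μ0
  unfold lsObj flPen at h
  have key : ∀ i, (z i - s * μt i) ^ 2 =
      (z i - s * μ0 i) ^ 2 - 2 * s * (η i * (μt i - μ0 i)) + f * (μt i - μ0 i) ^ 2 := by
    intro i
    rw [hz i]
    linear_combination (μt i - μ0 i) ^ 2 * hs2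
  have hsum : ∑ i ∈ Finset.Icc 1 n, (z i - s * μt i) ^ 2 =
      ∑ i ∈ Finset.Icc 1 n, (z i - s * μ0 i) ^ 2
        - 2 * s * ∑ i ∈ Finset.Icc 1 n, η i * (μt i - μ0 i)
        + f * ∑ i ∈ Finset.Icc 1 n, (μt i - μ0 i) ^ 2 := by
    rw [Finset.mul_sum, Finset.mul_sum, ← Finset.sum_sub_distrib, ← Finset.sum_add_distrib]
    exact Finset.sum_congr rfl fun i _ => key i
  -- l1 part
  have hP1 : ∑ i ∈ Finset.Icc 1 n, |μ0 i| - ∑ i ∈ Finset.Icc 1 n, |μt i|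
      ≤ ∑ i ∈ Finset.Icc 1 n, |μt i - μ0 i| := by
    rw [← Finset.sum_sub_distrib]
    apply Finset.sum_le_sum
    intro i _
    calc |μ0 i| - |μt i| ≤ |μ0 i - μt i| := abs_sub_abs_le_abs_sub _ _
      _ = |μt i - μ0 i| := abs_sub_comm _ _
  -- l2 part
  have hP2 : ∑ i ∈ Finset.Icc 2 n, |μ0 i - μ0 (i - 1)|
        - ∑ i ∈ Finset.Icc 2 n, |μt i - μt (i - 1)|
      ≤ 2 * ∑ i ∈ Finset.Icc 1 n, |μt i - μ0 i| := by
    have step : ∑ i ∈ Finset.Icc 2 n, |μ0 i - μ0 (i - 1)|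
          - ∑ i ∈ Finset.Icc 2 n, |μt i - μt (i - 1)|
        ≤ ∑ i ∈ Finset.Icc 2 n, (|μt i - μ0 i| + |μt (i - 1) - μ0 (i - 1)|) := by
      rw [← Finset.sum_sub_distrib]
      apply Finset.sum_le_sum
      intro i _
      have h1 : μ0 i - μ0 (i - 1) =
          (μt i - μt (i - 1)) - (μt i - μ0 i) + (μt (i - 1) - μ0 (i - 1)) := by ring
      calc |μ0 i - μ0 (i - 1)| - |μt i - μt (i - 1)|
          ≤ |(μ0 i - μ0 (i - 1)) - (μt i - μt (i - 1))| := abs_sub_abs_le_abs_sub _ _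
        _ = |-(μt i - μ0 i) + (μt (i - 1) - μ0 (i - 1))| := by rw [h1]; ring_nf
        _ ≤ |-(μt i - μ0 i)| + |μt (i - 1) - μ0 (i - 1)| := abs_add_le _ _
        _ = |μt i - μ0 i| + |μt (i - 1) - μ0 (i - 1)| := by rw [abs_neg]
    have hsub1 : ∑ i ∈ Finset.Icc 2 n, |μt i - μ0 i|
        ≤ ∑ i ∈ Finset.Icc 1 n, |μt i - μ0 i| := by
      apply Finset.sum_le_sum_of_subset_of_nonneg
      · intro x hx; simp only [Finset.mem_Icc] at *; omega
      · intros; positivity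
    have hre : ∑ i ∈ Finset.Icc 2 n, |μt (i - 1) - μ0 (i - 1)|
        = ∑ i ∈ Finset.Icc 1 (n - 1), |μt i - μ0 i| := by
      apply Finset.sum_nbij' (fun i => i - 1) (fun i => i + 1) <;>
        intros <;> simp_all only [Finset.mem_Icc] <;> first | omega | rfl
    have hsub2 : ∑ i ∈ Finset.Icc 1 (n - 1), |μt i - μ0 i|
        ≤ ∑ i ∈ Finset.Icc 1 n, |μt i - μ0 i| := by
      apply Finset.sum_le_sum_of_subset_of_nonneg
      · intro x hx; simp only [Finset.mem_Icc] at *; omega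
      · intros; positivity
    rw [Finset.sum_add_distrib, hre] at step
    linarith
  have hb1 : l1 * (∑ i ∈ Finset.Icc 1 n, |μ0 i| - ∑ i ∈ Finset.Icc 1 n, |μt i|)
      ≤ l1 * ∑ i ∈ Finset.Icc 1 n, |μt i - μ0 i| := mul_le_mul_of_nonneg_left hP1 hl1
  have hb2 : l2 * (∑ i ∈ Finset.Icc 2 n, |μ0 i - μ0 (i - 1)|
        - ∑ i ∈ Finset.Icc 2 n, |μt i - μt (i - 1)|)
      ≤ l2 * (2 * ∑ i ∈ Finset.Icc 1 n, |μt i - μ0 i|) := mul_le_mul_of_nonneg_left hP2 hl2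
  rw [hsum] at h
  nlinarith [h, hb1, hb2]
end

section
/- Fix λ1 ≥ 0 and λ2 ≥ 0 and define L(μ; y) = Σ_{i=1}^n |y_i − μ_i| + λ1·Σ_{i=1}^n |μ_i| + λ2·Σ_{i=2}^n |μ_i − μ_{i−1}|. Suppose y₀ ∈ ℝ^n is such that L(·; y₀) has a unique minimizer μ̂(y₀). Then for every sequence y_m → y₀ in ℝ^n and every choice of minimizers μ_m of L(·; y_m), one has μ_m → μ̂(y₀). In particular, at points of uniqueness the LAD-FLSA solution is a continuous function of the data y. -/
open Finset Filter

/-- The index `i-1` (with `0 - 1 = 0`) inside `Fin n`. -/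
def prevF {n : ℕ} (i : Fin n) : Fin n :=
  ⟨i.val - 1, lt_of_le_of_lt (Nat.sub_le _ _) i.isLt⟩

/-- LAD-FLSA objective
`L(μ; y) = ∑ i |y_i - μ_i| + λ1 ∑ i |μ_i| + λ2 ∑_{i ≥ 2} |μ_i - μ_{i-1}|`
(the `i = 1` term of the third sum vanishes since `prevF 0 = 0`). -/
noncomputable def ladObjF (n : ℕ) (l1 l2 : ℝ) (y μ : Fin n → ℝ) : ℝ :=
  ∑ i, |y i - μ i| + l1 * ∑ i, |μ i| + l2 * ∑ i, |μ i - μ (prevF i)|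

lemma ladObjF_tendsto (n : ℕ) (l1 l2 : ℝ) (y0 a : Fin n → ℝ) (g h : ℕ → Fin n → ℝ)
    (hg : Filter.Tendsto g atTop (nhds y0)) (hh : Filter.Tendsto h atTop (nhds a)) :
    Filter.Tendsto (fun k => ladObjF n l1 l2 (g k) (h k)) atTop
      (nhds (ladObjF n l1 l2 y0 a)) := by
  have hgi : ∀ i, Filter.Tendsto (fun k => g k i) atTop (nhds (y0 i)) :=
    fun i => ((continuous_apply i).tendsto y0).comp hg
  have hhi : ∀ i, Filter.Tendsto (fun k => h k i) atTop (nhds (a i)) :=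
    fun i => ((continuous_apply i).tendsto a).comp hh
  unfold ladObjF
  refine ((Filter.Tendsto.add ?_ ?_).add ?_)
  · exact tendsto_finset_sum _ fun i _ => ((hgi i).sub (hhi i)).abs
  · exact tendsto_const_nhds.mul (tendsto_finset_sum _ fun i _ => (hhi i).abs)
  · exact tendsto_const_nhds.mul
      (tendsto_finset_sum _ fun i _ => ((hhi i).sub (hhi (prevF i))).abs)

set_option maxHeartbeats 1000000 in
theorem stmt15 (n : ℕ) (l1 l2 : ℝ) (hl1 : 0 ≤ l1) (hl2 : 0 ≤ l2)
    (y0 : Fin n → ℝ) (μh0 : Fin n → ℝ)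
    -- `μh0` is the unique minimizer of `L(·; y0)`
    (hmin : ∀ μ, ladObjF n l1 l2 y0 μh0 ≤ ladObjF n l1 l2 y0 μ)
    (huniq : ∀ μ, (∀ μ', ladObjF n l1 l2 y0 μ ≤ ladObjF n l1 l2 y0 μ') → μ = μh0)
    -- a sequence of data converging to `y0` and minimizers for it
    (y : ℕ → Fin n → ℝ) (hy : Tendsto y atTop (nhds y0))
    (μs : ℕ → Fin n → ℝ)
    (hμs : ∀ m, ∀ μ, ladObjF n l1 l2 (y m) (μs m) ≤ ladObjF n l1 l2 (y m) μ) :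
    Tendsto μs atTop (nhds μh0) := by
  -- bound on the data
  obtain ⟨C, hC⟩ : ∃ C, ∀ m, ∑ i, |y m i| ≤ C := by
    have h1 : Tendsto (fun m => ∑ i, |y m i|) atTop (nhds (∑ i, |y0 i|)) := by
      apply tendsto_finset_sum
      intro i _
      exact (((continuous_apply i).tendsto y0).comp hy).abs
    obtain ⟨C, hCmem⟩ := h1.bddAbove_range
    exact ⟨C, fun m => hCmem ⟨m, rfl⟩⟩
  have hC0 : 0 ≤ C :=
    le_trans (Finset.sum_nonneg fun j _ => abs_nonneg _) (hC 0)
  -- coordinatewise bound on the minimizers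
  have hbound : ∀ m i, |μs m i| ≤ 2 * C := by
    intro m i
    have h0 := hμs m 0
    have hL0 : ladObjF n l1 l2 (y m) 0 = ∑ j, |y m j| := by simp [ladObjF]
    have hterm : |y m i - μs m i| ≤ ladObjF n l1 l2 (y m) (μs m) := by
      unfold ladObjF
      have h1 : |y m i - μs m i| ≤ ∑ j, |y m j - μs m j| :=
        Finset.single_le_sum (f := fun j => |y m j - μs m j|) (fun j _ => abs_nonneg _) (Finset.mem_univ i)
      have h2 : (0:ℝ) ≤ ∑ j, |μs m j| :=
        Finset.sum_nonneg fun j _ => abs_nonneg _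
      have h3 : (0:ℝ) ≤ ∑ j, |μs m j - μs m (prevF j)| :=
        Finset.sum_nonneg fun j _ => abs_nonneg _
      nlinarith
    have h4 : |y m i - μs m i| ≤ ∑ j, |y m j| := by
      rw [hL0] at h0; linarith
    have hyi : |y m i| ≤ ∑ j, |y m j| :=
      Finset.single_le_sum (f := fun j => |y m j|) (fun j _ => abs_nonneg _) (Finset.mem_univ i)
    have h5 : |μs m i| - |y m i| ≤ |μs m i - y m i| := abs_sub_abs_le_abs_sub _ _
    rw [abs_sub_comm] at h5
    have := hC m
    linarith
  have hmem : ∀ m, μs m ∈ Metric.closedBall (0 : Fin n → ℝ) (2 * C) := by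
    intro m
    rw [Metric.mem_closedBall, dist_zero_right]
    exact pi_norm_le_iff_of_nonneg (by linarith) |>.mpr fun i => by
      simpa [Real.norm_eq_abs] using hbound m i
  -- subsequence argument
  apply Filter.tendsto_of_subseq_tendsto
  intro ns hns
  obtain ⟨a, _, φ, hφ, hconv⟩ :=
    (isCompact_closedBall (0 : Fin n → ℝ) (2 * C)).tendsto_subseq
      (x := fun k => μs (ns k)) (fun k => hmem (ns k))
  refine ⟨φ, ?_⟩
  have hy' : Tendsto (fun k => y (ns (φ k))) atTop (nhds y0) :=
    hy.comp (hns.comp hφ.tendsto_atTop)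
  have haeq : a = μh0 := by
    apply huniq
    intro μ'
    have hconv' : Tendsto (fun k => μs (ns (φ k))) atTop (nhds a) := hconv
    have hL : Tendsto (fun k => ladObjF n l1 l2 (y (ns (φ k))) (μs (ns (φ k))))
        atTop (nhds (ladObjF n l1 l2 y0 a)) :=
      ladObjF_tendsto n l1 l2 y0 a _ _ hy' hconv'
    have hR : Tendsto (fun k => ladObjF n l1 l2 (y (ns (φ k))) μ')
        atTop (nhds (ladObjF n l1 l2 y0 μ')) :=
      ladObjF_tendsto n l1 l2 y0 μ' _ _ hy' tendsto_const_nhds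
    exact le_of_tendsto_of_tendsto' hL hR fun k => hμs _ _
  rw [← haeq]; exact hconv
end

section
/- Let Z be the n × n lower-triangular matrix of ones, i.e., Z_{ij} = 1 if j ≤ i and Z_{ij} = 0 otherwise. Let ρ_1 ≤ … ≤ ρ_n denote the eigenvalues of (1/n)·ZᵀZ. Then for all sufficiently large n: ρ_1 < 1/(3n) and ρ_n > 4·√n. In particular ρ_1 → 0 and ρ_n → ∞ as n → ∞, so the regularity condition that (1/n)·ZᵀZ converges to a positive definite matrix fails for this design. -/
open Filter Matrix Finset

section SpectralHelpers

lemma quadform_eq {m : Type*} [Fintype m] [DecidableEq m] {A : Matrix m m ℝ}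
    (hA : A.IsHermitian) (x : m → ℝ) :
    ∃ y : m → ℝ, x ⬝ᵥ A *ᵥ x = ∑ i, hA.eigenvalues i * (y i)^2 ∧ x ⬝ᵥ x = ∑ i, (y i)^2 := by
  set U : Matrix m m ℝ := (hA.eigenvectorUnitary : Matrix m m ℝ)
  have hU1 : U * star U = 1 := (Matrix.mem_unitaryGroup_iff).mp hA.eigenvectorUnitary.2
  refine ⟨star U *ᵥ x, ?_, ?_⟩
  · conv_lhs => rw [hA.spectral_theorem, Unitary.conjStarAlgAut_apply]
    rw [← Matrix.mulVec_mulVec, ← Matrix.mulVec_mulVec, Matrix.dotProduct_mulVec x U]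
    have hsU : star U = Uᵀ := by
      ext i j; simp [Matrix.star_eq_conjTranspose, Matrix.conjTranspose_apply]
    rw [hsU, ← Matrix.vecMul_transpose]
    simp [dotProduct, Matrix.mulVec_transpose, Matrix.vecMul_diagonal, mul_comm, sq,
      mul_assoc, mul_left_comm]
  · have h : (star U *ᵥ x) ⬝ᵥ (star U *ᵥ x) = x ⬝ᵥ x := by
      rw [Matrix.dotProduct_mulVec]
      have hsU : star U = Uᵀ := by
        ext i j; simp [Matrix.star_eq_conjTranspose, Matrix.conjTranspose_apply]
      rw [hsU, Matrix.vecMul_transpose, Matrix.mulVec_mulVec]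
      rw [← hsU, hU1, Matrix.one_mulVec]
    rw [← h]
    simp [dotProduct, sq]

lemma exists_eig_lt {m : Type*} [Fintype m] [DecidableEq m] {A : Matrix m m ℝ}
    (hA : A.IsHermitian) {x : m → ℝ} {c : ℝ} (h : x ⬝ᵥ A *ᵥ x < c * (x ⬝ᵥ x)) :
    ∃ i, hA.eigenvalues i < c := by
  by_contra hc
  push_neg at hc
  obtain ⟨y, h1, h2⟩ := quadform_eq hA x
  rw [h1, h2, Finset.mul_sum] at h
  exact absurd (Finset.sum_le_sum fun i _ => by nlinarith [sq_nonneg (y i), hc i]) (not_le.2 h)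

lemma exists_eig_gt {m : Type*} [Fintype m] [DecidableEq m] {A : Matrix m m ℝ}
    (hA : A.IsHermitian) {x : m → ℝ} {c : ℝ} (h : c * (x ⬝ᵥ x) < x ⬝ᵥ A *ᵥ x) :
    ∃ i, c < hA.eigenvalues i := by
  by_contra hc
  push_neg at hc
  obtain ⟨y, h1, h2⟩ := quadform_eq hA x
  rw [h1, h2, Finset.mul_sum] at h
  exact absurd (Finset.sum_le_sum fun i _ => by nlinarith [sq_nonneg (y i), hc i]) (not_le.2 h)

end SpectralHelpers

section Patterns

noncomputable def pfun : ℕ → ℝ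
  | 0 => 1 | 1 => -2 | 2 => 2 | _ => -1

noncomputable def Pfun : ℕ → ℝ
  | 0 => 0 | 1 => 1 | 2 => -1 | _ => 1

noncomputable def vv (q k : ℕ) : ℝ := if k < 4*q then pfun (k % 4) else 0

noncomputable def Sg (q m : ℕ) : ℝ := if m ≤ 4*q then Pfun (m % 4) else 0

lemma sum_vv (q m : ℕ) : ∑ k ∈ range m, vv q k = Sg q m := by
  induction m with
  | zero => simp [Sg, Pfun]
  | succ m ih =>
    rw [Finset.sum_range_succ, ih]
    unfold Sg vv
    by_cases hm : m < 4*q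
    · have h1 : m ≤ 4*q := by omega
      have h2 : m+1 ≤ 4*q := by omega
      have hmod : (m+1) % 4 = (m%4+1)%4 := by omega
      have h4 : m % 4 = 0 ∨ m % 4 = 1 ∨ m % 4 = 2 ∨ m % 4 = 3 := by omega
      rw [if_pos h1, if_pos h2, if_pos hm, hmod]
      rcases h4 with h|h|h|h <;> rw [h] <;> norm_num [pfun, Pfun]
    · rw [if_neg hm]
      by_cases h1 : m ≤ 4*q
      · have hm0 : m % 4 = 0 := by omega
        have h2 : ¬(m+1 ≤ 4*q) := by omega
        rw [if_pos h1, if_neg h2, hm0]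
        norm_num [Pfun]
      · have h2 : ¬(m+1 ≤ 4*q) := by omega
        rw [if_neg h1, if_neg h2]; ring

lemma patsq (q : ℕ) : ∑ m ∈ range (4*q), (Pfun ((m+1)%4))^2 = 3*(q:ℝ) := by
  induction q with
  | zero => simp
  | succ q ih =>
    have h : 4*(q+1) = (4*q)+1+1+1+1 := by ring
    rw [h, sum_range_succ, sum_range_succ, sum_range_succ, sum_range_succ, ih]
    have e1 : (4*q+1)%4 = 1 := by omega
    have e2 : (4*q+1+1)%4 = 2 := by omega
    have e3 : (4*q+1+1+1)%4 = 3 := by omega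
    have e4 : (4*q+1+1+1+1)%4 = 0 := by omega
    rw [e1, e2, e3, e4]
    norm_num [Pfun]; ring

lemma patv (q : ℕ) : ∑ k ∈ range (4*q), (pfun (k%4))^2 = 10*(q:ℝ) := by
  induction q with
  | zero => simp
  | succ q ih =>
    have h : 4*(q+1) = (4*q)+1+1+1+1 := by ring
    rw [h, sum_range_succ, sum_range_succ, sum_range_succ, sum_range_succ, ih]
    have e0 : (4*q)%4 = 0 := by omega
    have e1 : (4*q+1)%4 = 1 := by omega
    have e2 : (4*q+1+1)%4 = 2 := by omega
    have e3 : (4*q+1+1+1)%4 = 3 := by omega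
    rw [e0, e1, e2, e3]
    norm_num [pfun]; ring

lemma sumsq_Sg (q n : ℕ) (h : 4*q ≤ n) : ∑ m ∈ range n, (Sg q (m+1))^2 = 3*(q:ℝ) := by
  rw [← Finset.sum_subset (Finset.range_subset_range.2 h) (fun m _ hm => by
    have : 4*q < m+1 := by simp [Finset.mem_range] at hm; omega
    simp [Sg, Nat.not_le.2 this])]
  refine (Finset.sum_congr rfl fun m hm => ?_).trans (patsq q)
  have : m + 1 ≤ 4*q := by simp [Finset.mem_range] at hm; omega
  simp [Sg, this]

lemma sumsq_vv (q n : ℕ) (h : 4*q ≤ n) : ∑ k ∈ range n, (vv q k)^2 = 10*(q:ℝ) := by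
  rw [← Finset.sum_subset (Finset.range_subset_range.2 h) (fun k _ hk => by
    have : ¬ (k < 4*q) := by simp [Finset.mem_range] at hk; omega
    simp [vv, this])]
  refine (Finset.sum_congr rfl fun k hk => ?_).trans (patv q)
  have : k < 4*q := by simpa [Finset.mem_range] using hk
  simp [vv, this]

lemma cube_le (n : ℕ) : n^3 ≤ 3 * ∑ m ∈ range n, (m+1)^2 := by
  induction n with
  | zero => simp
  | succ n ih =>
    rw [sum_range_succ, mul_add]
    have h2 : (n+1)^3 = n^3 + (3*n^2+3*n+1) := by ring
    rw [h2]
    exact Nat.add_le_add ih (by nlinarith)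

end Patterns

theorem stmt17 :
    ∀ᶠ n : ℕ in atTop,
      ∀ Z : Matrix (Fin n) (Fin n) ℝ,
        (∀ i j : Fin n, Z i j = if j ≤ i then (1 : ℝ) else 0) →
        ∀ hA : (((n : ℝ)⁻¹) • (Zᵀ * Z)).IsHermitian,
          (∃ i, hA.eigenvalues i < 1 / (3 * (n : ℝ))) ∧
          (∃ i, 4 * Real.sqrt n < hA.eigenvalues i) := by
  filter_upwards [eventually_ge_atTop 145] with n hn
  intro Z hZ hA
  set q := n / 4 with hqdef
  have hq4 : 4*q ≤ n := by omega
  have hq1 : 1 ≤ q := by omega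
  have hn0 : (0:ℝ) < n := by exact_mod_cast (by omega : 0 < n)
  have hinv : (n:ℝ)⁻¹ * n = 1 := inv_mul_cancel₀ hn0.ne'
  have qform : ∀ w : Fin n → ℝ,
      w ⬝ᵥ ((((n : ℝ)⁻¹) • (Zᵀ * Z)) *ᵥ w) = (n:ℝ)⁻¹ * ((Z *ᵥ w) ⬝ᵥ (Z *ᵥ w)) := fun w => by
    rw [Matrix.smul_mulVec, dotProduct_smul, ← Matrix.mulVec_mulVec,
      Matrix.dotProduct_mulVec, Matrix.vecMul_transpose, smul_eq_mul]
  have Zmv : ∀ (w : ℕ → ℝ) (i : Fin n),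
      (Z *ᵥ (fun j => w j.val)) i = ∑ k ∈ range (i.val+1), w k := by
    intro w i
    have h1 : (Z *ᵥ (fun j => w j.val)) i
        = ∑ j : Fin n, (if j.val ≤ i.val then w j.val else 0) := by
      rw [Matrix.mulVec]
      refine Finset.sum_congr rfl fun j _ => ?_
      show Z i j * w j.val = _
      rw [hZ i j]
      by_cases h : j ≤ i
      · rw [if_pos h, if_pos (Fin.le_def.mp h), one_mul]
      · rw [if_neg h, if_neg (fun hc => h (Fin.le_def.mpr hc)), zero_mul]
    rw [h1, Fin.sum_univ_eq_sum_range (fun k => if k ≤ i.val then w k else 0)]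
    rw [← Finset.sum_filter]
    congr 1
    ext k
    simp only [Finset.mem_filter, Finset.mem_range, Nat.lt_succ_iff]
    have := i.isLt
    omega
  constructor
  · -- small eigenvalue
    apply exists_eig_lt hA (x := fun j : Fin n => vv q j.val)
    have hZx : (Z *ᵥ fun j : Fin n => vv q j.val) = fun i : Fin n => Sg q (i.val+1) :=
      funext fun i => by rw [Zmv, sum_vv]
    have e1 : (fun j : Fin n => vv q j.val) ⬝ᵥ
        ((((n : ℝ)⁻¹) • (Zᵀ * Z)) *ᵥ fun j : Fin n => vv q j.val) = (n:ℝ)⁻¹ * (3*(q:ℝ)) := by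
      rw [qform, hZx]
      congr 1
      calc (fun i : Fin n => Sg q (i.val+1)) ⬝ᵥ (fun i : Fin n => Sg q (i.val+1))
          = ∑ m ∈ range n, Sg q (m+1) * Sg q (m+1) :=
            Fin.sum_univ_eq_sum_range (fun m => Sg q (m+1) * Sg q (m+1)) n
        _ = ∑ m ∈ range n, (Sg q (m+1))^2 := by simp [sq]
        _ = 3*(q:ℝ) := sumsq_Sg q n hq4
    have e2 : (fun j : Fin n => vv q j.val) ⬝ᵥ (fun j : Fin n => vv q j.val) = 10*(q:ℝ) := by
      calc (fun j : Fin n => vv q j.val) ⬝ᵥ (fun j : Fin n => vv q j.val)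
          = ∑ k ∈ range n, vv q k * vv q k :=
            Fin.sum_univ_eq_sum_range (fun k => vv q k * vv q k) n
        _ = ∑ k ∈ range n, (vv q k)^2 := by simp [sq]
        _ = 10*(q:ℝ) := sumsq_vv q n hq4
    rw [e1, e2]
    have hqR : (1:ℝ) ≤ q := by exact_mod_cast hq1
    rw [div_mul_eq_mul_div, lt_div_iff₀ (by positivity : (0:ℝ) < 3*(n:ℝ))]
    have hexp : (n:ℝ)⁻¹ * (3*(q:ℝ)) * (3*(n:ℝ)) = 9*(q:ℝ) * ((n:ℝ)⁻¹ * n) := by ring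
    rw [hexp, hinv, mul_one, one_mul]
    linarith
  · -- large eigenvalue
    apply exists_eig_gt hA (x := fun _ : Fin n => (1:ℝ))
    have hZ1 : (Z *ᵥ fun _ : Fin n => (1:ℝ)) = fun i : Fin n => ((i.val+1 : ℕ) : ℝ) := by
      funext i
      have h := Zmv (fun _ => (1:ℝ)) i
      calc (Z *ᵥ fun _ : Fin n => (1:ℝ)) i = ∑ _k ∈ range (i.val+1), (1:ℝ) := h
        _ = ((i.val+1 : ℕ) : ℝ) := by simp
    have e1 : (fun _ : Fin n => (1:ℝ)) ⬝ᵥ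
        ((((n : ℝ)⁻¹) • (Zᵀ * Z)) *ᵥ fun _ : Fin n => (1:ℝ))
        = (n:ℝ)⁻¹ * ((∑ m ∈ range n, (m+1)^2 : ℕ) : ℝ) := by
      rw [qform, hZ1]
      congr 1
      calc (fun i : Fin n => ((i.val+1 : ℕ) : ℝ)) ⬝ᵥ (fun i : Fin n => ((i.val+1 : ℕ) : ℝ))
          = ∑ m ∈ range n, ((m+1 : ℕ) : ℝ) * ((m+1 : ℕ) : ℝ) :=
            Fin.sum_univ_eq_sum_range (fun m => ((m+1 : ℕ) : ℝ) * ((m+1 : ℕ) : ℝ)) n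
        _ = ((∑ m ∈ range n, (m+1)^2 : ℕ) : ℝ) := by push_cast; simp [sq]
    have e2 : (fun _ : Fin n => (1:ℝ)) ⬝ᵥ (fun _ : Fin n => (1:ℝ)) = (n:ℝ) := by
      simp [dotProduct]
    rw [e1, e2]
    set SS : ℝ := ((∑ m ∈ range n, (m+1)^2 : ℕ) : ℝ) with hSSdef
    have hSS3 : (n:ℝ)^3 ≤ 3*SS := by
      rw [hSSdef]
      exact_mod_cast cube_le n
    have hs0 : (0:ℝ) ≤ Real.sqrt n := Real.sqrt_nonneg _
    have hs2 : (Real.sqrt n)^2 = n := Real.sq_sqrt hn0.le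
    have hs12 : (12:ℝ) < Real.sqrt n := by
      rw [Real.lt_sqrt (by norm_num)]
      norm_num
      exact_mod_cast (by omega : 144 < n)
    have key2 : (n:ℝ)^2 ≤ 3 * ((n:ℝ)⁻¹ * SS) := by
      have h := mul_le_mul_of_nonneg_left hSS3 (inv_nonneg.2 hn0.le)
      have hid : (n:ℝ)⁻¹ * (n:ℝ)^3 = (n:ℝ)^2 * ((n:ℝ)⁻¹ * n) := by ring
      rw [hid, hinv, mul_one] at h
      linarith
    have h4s : 3 * (4 * Real.sqrt n * (n:ℝ)) < (n:ℝ)^2 := by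
      nlinarith [mul_pos (sub_pos.2 hs12) (pow_pos (lt_of_le_of_lt (by norm_num) hs12) 3)]
    linarith
end
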